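/- Let A be the 5×5 complex matrix with rows (2,0,1,0,1), (1,1,0,0,1), (1,0,0,0,1), (−1,0,0,0,0), (0,0,0,1,0), and let ρ be the unique real root of x³ − x² − 2x − 1. Then for any matrix norm ‖·‖ the limit lim_{n→∞} ‖Aⁿ‖^{1/n} exists and equals ρ; equivalently, the spectral radius of A is ρ. -/

import Mathlib

open Filter
open scoped NNReal

/-- The matrix of the pullback `f*` on `Pic(𝒳)`, as a complex matrix. -/
def ApicC : Matrix (Fin 5) (Fin 5) ℂ :=
  !![2, 0, 1, 0, 1;
     1, 1, 0, 0, 1;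
     1, 0, 0, 0, 1;
    -1, 0, 0, 0, 0;
     0, 0, 0, 1, 0]

attribute [local instance] Matrix.linftyOpNormedRing Matrix.linftyOpNormedAlgebra

lemma ApicC_spec_iff (z : ℂ) :
    z ∈ spectrum ℂ ApicC ↔ (z^3 - z^2 - 2*z - 1) * (z-1)^2 = 0 := by
  rw [spectrum.mem_iff, Matrix.isUnit_iff_isUnit_det, isUnit_iff_ne_zero, not_not]
  have h : (algebraMap ℂ (Matrix (Fin 5) (Fin 5) ℂ) z - ApicC) =
      !![z-2, 0, -1, 0, -1;
         -1, z-1, 0, 0, -1;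
         -1, 0, z, 0, -1;
         1, 0, 0, z, 0;
         0, 0, 0, -1, z] := by
    ext i j
    fin_cases i <;> fin_cases j <;>
      simp [ApicC, Matrix.algebraMap_matrix_apply, Matrix.one_apply, Matrix.vecHead,
        Matrix.vecTail]
  rw [h]
  have hd : Matrix.det !![z-2, 0, -1, 0, -1;
         -1, z-1, 0, 0, -1;
         -1, 0, z, 0, -1;
         1, 0, 0, z, 0;
         0, 0, 0, -1, z] = (z^3 - z^2 - 2*z - 1) * (z-1)^2 := by
    simp [Matrix.det_succ_row_zero, Fin.sum_univ_succ]
    simp [Fin.succAbove, Fin.lt_iff_val_lt_val]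
    ring
  rw [hd]

lemma norm_equiv (N : Matrix (Fin 5) (Fin 5) ℂ → ℝ)
    (hadd : ∀ x y, N (x+y) ≤ N x + N y)
    (hsmul : ∀ (c:ℂ) x, N (c • x) = ‖c‖ * N x)
    (hzero : ∀ x, N x = 0 ↔ x = 0) :
    ∃ c C : ℝ, 0 < c ∧ 0 < C ∧ ∀ x, c * ‖x‖ ≤ N x ∧ N x ≤ C * ‖x‖ := by
  classical
  have hN0 : N 0 = 0 := (hzero 0).mpr rfl
  have hNneg : ∀ x, N (-x) = N x := fun x => by
    simpa using hsmul (-1) x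
  have hNnonneg : ∀ x, 0 ≤ N x := fun x => by
    have := hadd x (-x)
    rw [add_neg_cancel, hN0, hNneg] at this
    linarith
  have hsum : ∀ {α : Type} [DecidableEq α] (s : Finset α)
      (f : α → Matrix (Fin 5) (Fin 5) ℂ),
      N (∑ a ∈ s, f a) ≤ ∑ a ∈ s, N (f a) := by
    intro α _ s f
    induction s using Finset.induction with
    | empty => simp [hN0]
    | insert _ _ h ih =>
      rw [Finset.sum_insert h, Finset.sum_insert h]
      exact le_trans (hadd _ _) (by linarith)
  have hentry : ∀ (x : Matrix (Fin 5) (Fin 5) ℂ) i j, ‖x i j‖ ≤ ‖x‖ := by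
    intro x i j
    rw [Matrix.linfty_opNorm_def]
    calc ‖x i j‖ ≤ ∑ j', ‖x i j'‖ :=
          Finset.single_le_sum (f := fun j' => ‖x i j'‖) (fun _ _ => norm_nonneg _)
            (Finset.mem_univ j)
      _ ≤ _ := by
          have := Finset.le_sup (f := fun i => ∑ j', ‖x i j'‖₊) (Finset.mem_univ i)
          have h2 : ((∑ j', ‖x i j'‖₊ : ℝ≥0) : ℝ) ≤
              ((Finset.univ.sup fun i => ∑ j', ‖x i j'‖₊ : ℝ≥0) : ℝ) := by exact_mod_cast this
          simpa [NNReal.coe_sum] using h2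
  set C := ∑ p : Fin 5 × Fin 5, N (Matrix.single p.1 p.2 1) + 1 with hC
  have hCpos : 0 < C := by
    have : 0 ≤ ∑ p : Fin 5 × Fin 5, N (Matrix.single p.1 p.2 1) :=
      Finset.sum_nonneg fun _ _ => hNnonneg _
    positivity
  have hupper : ∀ x, N x ≤ C * ‖x‖ := by
    intro x
    have e : ∑ p : Fin 5 × Fin 5, (x p.1 p.2) • Matrix.single p.1 p.2 1 = x := by
      simp only [Matrix.smul_single, smul_eq_mul, mul_one]
      rw [← Finset.univ_product_univ, Finset.sum_product]
      exact (Matrix.matrix_eq_sum_single x).symm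
    calc N x = N (∑ p : Fin 5 × Fin 5, (x p.1 p.2) • Matrix.single p.1 p.2 1) := by
          rw [e]
      _ ≤ ∑ p : Fin 5 × Fin 5, N ((x p.1 p.2) • Matrix.single p.1 p.2 1) := hsum _ _
      _ = ∑ p : Fin 5 × Fin 5, ‖x p.1 p.2‖ * N (Matrix.single p.1 p.2 1) :=
          Finset.sum_congr rfl (fun p _ => hsmul _ _)
      _ ≤ ∑ p : Fin 5 × Fin 5, ‖x‖ * N (Matrix.single p.1 p.2 1) :=
          Finset.sum_le_sum fun p _ =>
            mul_le_mul_of_nonneg_right (hentry x p.1 p.2) (hNnonneg _)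
      _ = (∑ p : Fin 5 × Fin 5, N (Matrix.single p.1 p.2 1)) * ‖x‖ := by
          rw [← Finset.mul_sum]; ring
      _ ≤ C * ‖x‖ := by
          apply mul_le_mul_of_nonneg_right _ (norm_nonneg _)
          rw [hC]; linarith
  have hNcont : Continuous N := by
    refine Metric.continuous_iff.mpr ?_
    intro x ε hε
    refine ⟨ε / C, by positivity, fun y hy => ?_⟩
    have h1 : N y - N x ≤ N (y - x) := by
      have := hadd (y - x) x; simpa using this
    have h2 : N x - N y ≤ N (y - x) := by
      have := hadd (x - y) y
      rw [sub_add_cancel] at this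
      have h3 : N (x - y) = N (y - x) := by rw [← hNneg (x-y), neg_sub]
      linarith
    have h4 : N (y - x) ≤ C * ‖y - x‖ := hupper _
    have h5 : ‖y - x‖ * C < ε := by
      rw [← lt_div_iff₀ hCpos]
      rwa [← dist_eq_norm]
    have : |N y - N x| < ε := by
      rw [abs_sub_lt_iff]
      constructor <;> nlinarith [mul_comm C ‖y - x‖]
    calc dist (N y) (N x) = |N y - N x| := Real.dist_eq _ _
      _ < ε := this
  obtain ⟨x₀, hx₀mem, hx₀min⟩ :=
    (isCompact_sphere (0 : Matrix (Fin 5) (Fin 5) ℂ) 1).exists_isMinOn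
      (NormedSpace.sphere_nonempty.mpr zero_le_one) hNcont.continuousOn
  have hx₀ : ‖x₀‖ = 1 := by simpa using hx₀mem
  have hcpos : 0 < N x₀ := by
    rcases (hNnonneg x₀).lt_or_eq with h | h
    · exact h
    · exfalso
      have : x₀ = 0 := (hzero x₀).mp h.symm
      rw [this] at hx₀; simp at hx₀
  refine ⟨N x₀, C, hcpos, hCpos, fun x => ⟨?_, hupper x⟩⟩
  rcases eq_or_ne x 0 with rfl | hx
  · simp [hN0]
  · have hxn : ‖x‖ ≠ 0 := norm_ne_zero_iff.mpr hx
    have hxnpos : (0:ℝ) < ‖x‖ := norm_pos_iff.mpr hx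
    have hmem : (‖x‖⁻¹ : ℂ) • x ∈ Metric.sphere (0 : Matrix (Fin 5) (Fin 5) ℂ) 1 := by
      simp [norm_smul, inv_mul_cancel₀ hxn]
    have hle := hx₀min hmem
    simp only [Set.mem_setOf_eq] at hle
    have h6 : N ((‖x‖⁻¹ : ℂ) • x) = ‖x‖⁻¹ * N x := by
      rw [hsmul]; congr 1; simp [abs_of_nonneg (norm_nonneg x)]
    rw [h6] at hle
    calc N x₀ * ‖x‖ ≤ (‖x‖⁻¹ * N x) * ‖x‖ :=
          mul_le_mul_of_nonneg_right hle (le_of_lt hxnpos)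
      _ = N x := by field_simp

/-- For any matrix norm `N`, the limit `lim ‖Aⁿ‖^{1/n}` exists and equals the unique real
root `ρ` of `x³ - x² - 2x - 1`; equivalently, the spectral radius of `A` is `ρ`. -/
theorem degree_growth_rate (ρ : ℝ) (hρ : ρ ^ 3 - ρ ^ 2 - 2 * ρ - 1 = 0) :
    (∀ N : Matrix (Fin 5) (Fin 5) ℂ → ℝ,
      (∀ x y, N (x + y) ≤ N x + N y) →
      (∀ (c : ℂ) (x), N (c • x) = ‖c‖ * N x) →
      (∀ x, N x = 0 ↔ x = 0) →
      Tendsto (fun n : ℕ => (N (ApicC ^ n)) ^ ((1 : ℝ) / n)) atTop (nhds ρ)) ∧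
    (∀ z ∈ spectrum ℂ ApicC, ‖z‖ ≤ ρ) ∧
    (∃ z ∈ spectrum ℂ ApicC, ‖z‖ = ρ) := by
  have hρ2 : 2 < ρ := by
    by_contra h
    push_neg at h
    nlinarith [sq_nonneg (ρ + 1), sq_nonneg ρ, sq_nonneg (2*ρ + 1), sq_nonneg (ρ - 2)]
  have hρ0 : (0:ℝ) ≤ ρ := by linarith
  have hub : ∀ z ∈ spectrum ℂ ApicC, ‖z‖ ≤ ρ := by
    intro z hz
    rw [ApicC_spec_iff] at hz
    rcases mul_eq_zero.mp hz with h | h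
    · -- cubic root
      set t := ‖z‖ with ht
      have ht0 : 0 ≤ t := norm_nonneg z
      have hz3 : z^3 = z^2 + 2*z + 1 := by linear_combination h
      have htineq : t^3 ≤ t^2 + 2*t + 1 := by
        calc t^3 = ‖z^3‖ := by rw [norm_pow]
          _ = ‖z^2 + 2*z + 1‖ := by rw [hz3]
          _ ≤ ‖z^2‖ + ‖2*z‖ + ‖(1:ℂ)‖ := by
              refine le_trans (norm_add_le _ _) ?_
              have := norm_add_le (z^2) (2*z)
              linarith
          _ = t^2 + 2*t + 1 := by simp [norm_pow, norm_mul, ht]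
      by_contra hcon
      push_neg at hcon
      nlinarith [mul_pos (by linarith : (0:ℝ) < t - ρ)
        (by nlinarith : (0:ℝ) < t^2 + t*ρ + ρ^2 - t - ρ - 2)]
    · -- z = 1
      have : z = 1 := by
        have := pow_eq_zero_iff (n := 2) (by norm_num) |>.mp h
        linear_combination this
      rw [this]; simp; linarith
  have hmem : (ρ:ℂ) ∈ spectrum ℂ ApicC := by
    rw [ApicC_spec_iff]
    have : ((ρ:ℂ))^3 - ((ρ:ℂ))^2 - 2*(ρ:ℂ) - 1 = ((ρ^3 - ρ^2 - 2*ρ - 1 : ℝ) : ℂ) := by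
      push_cast; ring
    rw [this, hρ]
    simp
  have habs : ‖(ρ:ℂ)‖ = ρ := by
    simp [abs_of_nonneg hρ0]
  refine ⟨?_, hub, ⟨(ρ:ℂ), hmem, habs⟩⟩
  intro N hadd hsmul hzero
  -- spectral radius
  have hsp : spectralRadius ℂ ApicC = ENNReal.ofReal ρ := by
    apply le_antisymm
    · apply iSup₂_le
      intro z hz
      have := hub z hz
      rw [← ENNReal.ofReal_coe_nnreal]
      apply ENNReal.ofReal_le_ofReal
      simpa using this
    · have := le_iSup₂ (f := fun (k:ℂ) (_ : k ∈ spectrum ℂ ApicC) => (‖k‖₊ : ENNReal)) _ hmem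
      refine le_trans ?_ this
      simp [← ENNReal.ofReal_coe_nnreal,
        abs_of_nonneg hρ0]
  have hlim : Tendsto (fun n : ℕ => ‖ApicC ^ n‖ ^ ((1:ℝ) / n)) atTop (nhds ρ) := by
    have h := spectrum.pow_nnnorm_pow_one_div_tendsto_nhds_spectralRadius ApicC
    rw [hsp] at h
    have h2 := (ENNReal.tendsto_toReal (by simp)).comp h
    simp only [Function.comp_def] at h2
    convert h2 using 2 with n
    · rw [← ENNReal.toReal_rpow]
      simp
    · rw [ENNReal.toReal_ofReal hρ0]
  obtain ⟨c, C, hc, hC, hcC⟩ := norm_equiv N hadd hsmul hzero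
  have hNnonneg : ∀ x, 0 ≤ N x := fun x =>
    le_trans (by positivity) ((hcC x).1)
  have hrpow1 : ∀ {b : ℝ}, 0 < b →
      Tendsto (fun n : ℕ => b ^ ((1:ℝ) / n)) atTop (nhds 1) := by
    intro b hb
    have hcont : ContinuousAt (fun y : ℝ => b ^ y) 0 :=
      Real.continuousAt_const_rpow hb.ne'
    have := hcont.tendsto.comp tendsto_one_div_atTop_nhds_zero_nat
    simpa [Function.comp_def, Real.rpow_zero] using this
  have hlo : Tendsto (fun n : ℕ => c ^ ((1:ℝ)/n) * ‖ApicC ^ n‖ ^ ((1:ℝ)/n)) atTop (nhds ρ) := by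
    have := (hrpow1 hc).mul hlim
    simpa using this
  have hhi : Tendsto (fun n : ℕ => C ^ ((1:ℝ)/n) * ‖ApicC ^ n‖ ^ ((1:ℝ)/n)) atTop (nhds ρ) := by
    have := (hrpow1 hC).mul hlim
    simpa using this
  apply tendsto_of_tendsto_of_tendsto_of_le_of_le hlo hhi
  · intro n
    dsimp only
    rw [← Real.mul_rpow hc.le (norm_nonneg _)]
    exact Real.rpow_le_rpow (by positivity) ((hcC _).1) (by positivity)
  · intro n
    dsimp only
    rw [← Real.mul_rpow hC.le (norm_nonneg _)]
    exact Real.rpow_le_rpow (hNnonneg _) ((hcC _).2) (by positivity)
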